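/- Let d ≥ 1 and let V_1, …, V_n (n ≥ 2) be nonzero proper linear subspaces of ℝ^d with positive weights ω_1, …, ω_n, and set m := Σ_{j=1}^n ω_j·dim(V_j). Assume that m²/d − Σ_{j=1}^n ω_j²·dim(V_j) ≥ 0. Then for every integer p ≥ 1, FFP({(V_j, ω_j)}_{j=1}^n, p) ≥ (m²/d − Σ_{j=1}^n ω_j²·dim(V_j))^p / (Σ_{i≠j} ω_i ω_j)^{p−1} + Σ_{j=1}^n ω_j²·dim(V_j)^p. -/

import Mathlib

open scoped BigOperators
open Matrix

/-- The orthogonal projection onto a subspace `V` of `ℝ^d`, as a linear endomorphism. -/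
noncomputable def proj {d : ℕ} (V : Submodule ℝ (EuclideanSpace ℝ (Fin d))) :
    EuclideanSpace ℝ (Fin d) →ₗ[ℝ] EuclideanSpace ℝ (Fin d) :=
  V.subtype ∘ₗ (Submodule.orthogonalProjection V).toLinearMap

/-- `⟨P_V, P_W⟩ = trace (P_V P_W)`. -/
noncomputable def trPP {d : ℕ} (V W : Submodule ℝ (EuclideanSpace ℝ (Fin d))) : ℝ :=
  LinearMap.trace ℝ _ (proj V ∘ₗ proj W)

noncomputable def pmat {d : ℕ} (V : Submodule ℝ (EuclideanSpace ℝ (Fin d))) :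
    Matrix (Fin d) (Fin d) ℝ :=
  LinearMap.toMatrix (EuclideanSpace.basisFun (Fin d) ℝ).toBasis
    (EuclideanSpace.basisFun (Fin d) ℝ).toBasis (proj V)

lemma trPP_eq {d : ℕ} (V W : Submodule ℝ (EuclideanSpace ℝ (Fin d))) :
    trPP V W = (pmat V * pmat W).trace := by
  rw [trPP, LinearMap.trace_eq_matrix_trace ℝ (EuclideanSpace.basisFun (Fin d) ℝ).toBasis,
    LinearMap.toMatrix_comp _ (EuclideanSpace.basisFun (Fin d) ℝ).toBasis]
  rfl

lemma proj_comp_self {d : ℕ} (V : Submodule ℝ (EuclideanSpace ℝ (Fin d))) :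
    proj V ∘ₗ proj V = proj V := by
  ext x
  simp [proj, Submodule.orthogonalProjection_mem_subspace_eq_self, Submodule.starProjection_eq_self_iff.mpr (Submodule.starProjection_apply V x ▸ (Submodule.orthogonalProjection V x).2)]

lemma pmat_mul_self {d : ℕ} (V : Submodule ℝ (EuclideanSpace ℝ (Fin d))) :
    pmat V * pmat V = pmat V := by
  rw [pmat, ← LinearMap.toMatrix_comp _ (EuclideanSpace.basisFun (Fin d) ℝ).toBasis, proj_comp_self]

lemma pmat_apply {d : ℕ} (V : Submodule ℝ (EuclideanSpace ℝ (Fin d))) (i j : Fin d) :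
    pmat V i j = proj V (EuclideanSpace.single j 1) i := by
  simp [pmat, LinearMap.toMatrix_apply]

lemma pmat_symm {d : ℕ} (V : Submodule ℝ (EuclideanSpace ℝ (Fin d))) :
    (pmat V)ᵀ = pmat V := by
  ext i j
  rw [Matrix.transpose_apply, pmat_apply, pmat_apply]
  have h1 : ∀ x : EuclideanSpace ℝ (Fin d), ∀ k : Fin d,
      x k = inner ℝ (EuclideanSpace.single k (1:ℝ)) x := by
    intro x k; rw [EuclideanSpace.inner_single_left]; simp
  rw [h1 (proj V (EuclideanSpace.single i 1)) j, h1 (proj V (EuclideanSpace.single j 1)) i]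
  have := Submodule.inner_starProjection_left_eq_right V
      (EuclideanSpace.single j (1:ℝ)) (EuclideanSpace.single i (1:ℝ))
  have h2 : ∀ u v : EuclideanSpace ℝ (Fin d),
      inner ℝ (proj V u) v = (inner ℝ u (proj V v) : ℝ) := fun u v =>
    Submodule.inner_starProjection_left_eq_right V u v
  rw [real_inner_comm, h2]

lemma pmat_trace {d : ℕ} (V : Submodule ℝ (EuclideanSpace ℝ (Fin d))) :
    (pmat V).trace = (Module.finrank ℝ V : ℝ) := by
  have hproj : LinearMap.IsProj V (proj V) := by
    constructor
    · intro x; exact (Submodule.orthogonalProjection V x).2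
    · intro x hx; simp [proj, Submodule.orthogonalProjection_mem_subspace_eq_self ⟨x, hx⟩]
  have := hproj.trace
  rw [← this, LinearMap.trace_eq_matrix_trace ℝ (EuclideanSpace.basisFun (Fin d) ℝ).toBasis, pmat]

lemma trace_mul_nonneg {d : ℕ} (A B : Matrix (Fin d) (Fin d) ℝ)
    (hA : Aᵀ = A) (hB : Bᵀ = B) (hA2 : A * A = A) (hB2 : B * B = B) :
    0 ≤ (A * B).trace := by
  have hM : (B * A)ᵀ = A * B := by rw [Matrix.transpose_mul, hA, hB]
  have key : (A * B).trace = ((B * A)ᵀ * (B * A)).trace := by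
    rw [hM]
    calc (A * B).trace = ((A * A) * (B * B)).trace := by rw [hA2, hB2]
      _ = (A * ((A * B) * B)).trace := by rw [mul_assoc, mul_assoc]
      _ = (((A * B) * B) * A).trace := by rw [Matrix.trace_mul_comm]
      _ = (A * B * (B * A)).trace := by rw [mul_assoc]
  rw [key]
  have h2 : ((B * A)ᵀ * (B * A)).trace = ∑ i, ∑ j, (B * A) j i * (B * A) j i := by
    simp [Matrix.trace, Matrix.diag, Matrix.mul_apply, Matrix.transpose_apply, mul_comm]
  rw [h2]
  exact Finset.sum_nonneg fun i _ => Finset.sum_nonneg fun j _ => mul_self_nonneg _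

lemma sq_trace_le {d : ℕ} (S : Matrix (Fin d) (Fin d) ℝ) (hS : Sᵀ = S) :
    S.trace ^ 2 ≤ d * (S * S).trace := by
  have h1 : (S * S).trace = ∑ i, ∑ j, S i j ^ 2 := by
    simp only [Matrix.trace, Matrix.diag, Matrix.mul_apply]
    refine Finset.sum_congr rfl fun i _ => Finset.sum_congr rfl fun j _ => ?_
    have h := congrFun (congrFun hS j) i
    rw [Matrix.transpose_apply] at h
    rw [← h, sq]
  have h2 : ∑ i, S i i ^ 2 ≤ ∑ i, ∑ j, S i j ^ 2 := by
    refine Finset.sum_le_sum fun i _ => ?_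
    exact Finset.single_le_sum (f := fun j => S i j ^ 2) (fun j _ => sq_nonneg _)
      (Finset.mem_univ i)
  have h3 : S.trace ^ 2 ≤ d * ∑ i, S i i ^ 2 := by
    have := sq_sum_le_card_mul_sum_sq (s := Finset.univ) (f := fun i : Fin d => S i i)
    simpa [Matrix.trace, Matrix.diag] using this
  calc S.trace ^ 2 ≤ d * ∑ i, S i i ^ 2 := h3
    _ ≤ d * ∑ i, ∑ j, S i j ^ 2 := by
        exact mul_le_mul_of_nonneg_left h2 (by positivity)
    _ = d * (S * S).trace := by rw [h1]

lemma sum_split {n : ℕ} (f : Fin n → Fin n → ℝ) :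
    ∑ i, ∑ j, f i j =
      (∑ ij ∈ Finset.univ.offDiag (α := Fin n), f ij.1 ij.2) + ∑ j, f j j := by
  rw [← Finset.sum_product', ← Finset.diag_union_offDiag,
    Finset.sum_union (Finset.disjoint_diag_offDiag _), Finset.sum_diag]
  ring

/-- The `p`-fusion frame potential. -/
noncomputable def FFP {d n : ℕ} (V : Fin n → Submodule ℝ (EuclideanSpace ℝ (Fin d)))
    (ω : Fin n → ℝ) (p : ℕ) : ℝ :=
  ∑ i, ∑ j, ω i * ω j * trPP (V i) (V j) ^ p

theorem stmt0 {d n : ℕ} (hd : 1 ≤ d) (hn : 2 ≤ n)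
    (V : Fin n → Submodule ℝ (EuclideanSpace ℝ (Fin d)))
    (hVbot : ∀ j, V j ≠ ⊥) (hVtop : ∀ j, V j ≠ ⊤)
    (ω : Fin n → ℝ) (hω : ∀ j, 0 < ω j)
    (m : ℝ) (hm : m = ∑ j, ω j * (Module.finrank ℝ (V j) : ℝ))
    (hpos : 0 ≤ m ^ 2 / d - ∑ j, ω j ^ 2 * (Module.finrank ℝ (V j) : ℝ))
    (p : ℕ) (hp : 1 ≤ p) :
    FFP V ω p ≥
      (m ^ 2 / d - ∑ j, ω j ^ 2 * (Module.finrank ℝ (V j) : ℝ)) ^ p /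
        (∑ ij ∈ Finset.univ.offDiag (α := Fin n), ω ij.1 * ω ij.2) ^ (p - 1) +
      ∑ j, ω j ^ 2 * (Module.finrank ℝ (V j) : ℝ) ^ p := by
  classical
  set D : ℝ := ∑ j, ω j ^ 2 * (Module.finrank ℝ (V j) : ℝ) with hD
  set A : Fin n → Matrix (Fin d) (Fin d) ℝ := fun j => pmat (V j) with hA
  set x : Fin n → Fin n → ℝ := fun i j => (A i * A j).trace with hx
  have hxnn : ∀ i j, 0 ≤ x i j := fun i j =>
    trace_mul_nonneg _ _ (pmat_symm _) (pmat_symm _) (pmat_mul_self _) (pmat_mul_self _)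
  have hxdiag : ∀ j, x j j = (Module.finrank ℝ (V j) : ℝ) := fun j => by
    show (pmat (V j) * pmat (V j)).trace = _
    rw [pmat_mul_self, pmat_trace]
  have htr : ∀ i j, trPP (V i) (V j) = x i j := fun i j => trPP_eq _ _
  set S : Matrix (Fin d) (Fin d) ℝ := ∑ j, ω j • A j with hS
  have hSsym : Sᵀ = S := by
    rw [hS, Matrix.transpose_sum]
    exact Finset.sum_congr rfl fun j _ => by
      rw [Matrix.transpose_smul]
      show ω j • (pmat (V j))ᵀ = _
      rw [pmat_symm]
  have hStr : S.trace = m := by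
    rw [hS, hm, Matrix.trace_sum]
    exact Finset.sum_congr rfl fun j _ => by
      rw [Matrix.trace_smul]
      show ω j • (pmat (V j)).trace = _
      rw [pmat_trace]; rfl
  have hSS : (S * S).trace = ∑ i, ∑ j, ω i * ω j * x i j := by
    rw [hS, Finset.sum_mul_sum]
    rw [Matrix.trace_sum]
    refine Finset.sum_congr rfl fun i _ => ?_
    rw [Matrix.trace_sum]
    refine Finset.sum_congr rfl fun j _ => ?_
    rw [smul_mul_smul_comm, Matrix.trace_smul, smul_eq_mul]
  -- split
  set W : ℝ := ∑ ij ∈ Finset.univ.offDiag (α := Fin n), ω ij.1 * ω ij.2 with hW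
  set T : ℝ := ∑ ij ∈ Finset.univ.offDiag (α := Fin n),
      ω ij.1 * ω ij.2 * x ij.1 ij.2 with hT
  have hsplit : (S * S).trace = T + D := by
    rw [hSS, sum_split (fun i j => ω i * ω j * x i j)]
    congr 1
    refine Finset.sum_congr rfl fun j _ => ?_
    rw [hxdiag, sq]
  have hdpos : (0 : ℝ) < d := by exact_mod_cast hd
  have hTlow : m ^ 2 / d - D ≤ T := by
    have := sq_trace_le S hSsym
    rw [hStr, hsplit] at this
    have h2 : m ^ 2 / d ≤ T + D := by
      rw [div_le_iff₀ hdpos]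
      linarith [this]
    linarith
  have hTnn : 0 ≤ T := le_trans hpos hTlow
  have hoffne : (Finset.univ.offDiag (α := Fin n)).Nonempty := by
    refine ⟨((⟨0, by omega⟩ : Fin n), (⟨1, by omega⟩ : Fin n)), ?_⟩
    simp [Finset.mem_offDiag, Fin.ext_iff]
  have hWpos : 0 < W := by
    refine Finset.sum_pos (fun ij _ => mul_pos (hω _) (hω _)) hoffne
  -- Jensen
  have hjen := (convexOn_pow (𝕜 := ℝ) p).map_centerMass_le
    (t := Finset.univ.offDiag (α := Fin n))
    (w := fun ij => ω ij.1 * ω ij.2) (p := fun ij => x ij.1 ij.2)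
    (fun ij _ => le_of_lt (mul_pos (hω _) (hω _)))
    (by rw [← hW] at *; exact hWpos)
    (fun ij _ => hxnn _ _)
  have hcm1 : (Finset.univ.offDiag (α := Fin n)).centerMass
      (fun ij => ω ij.1 * ω ij.2) (fun ij => x ij.1 ij.2) = W⁻¹ * T := by
    simp [Finset.centerMass, smul_eq_mul, hW, hT]
  have hcm2 : (Finset.univ.offDiag (α := Fin n)).centerMass
      (fun ij => ω ij.1 * ω ij.2)
      ((fun y : ℝ => y ^ p) ∘ fun ij => x ij.1 ij.2) =
      W⁻¹ * ∑ ij ∈ Finset.univ.offDiag (α := Fin n),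
        ω ij.1 * ω ij.2 * x ij.1 ij.2 ^ p := by
    simp [Finset.centerMass, smul_eq_mul, hW, mul_assoc]
  rw [hcm1, hcm2] at hjen
  set Q : ℝ := ∑ ij ∈ Finset.univ.offDiag (α := Fin n),
      ω ij.1 * ω ij.2 * x ij.1 ij.2 ^ p with hQ
  have hWp : W ^ p = W ^ (p - 1) * W := by
    conv_lhs => rw [show p = (p - 1) + 1 by omega]
    rw [pow_succ]
  have hQlow : T ^ p / W ^ (p - 1) ≤ Q := by
    have h1 : W * (W⁻¹ * T) ^ p ≤ Q := by
      calc W * (W⁻¹ * T) ^ p ≤ W * (W⁻¹ * Q) := by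
            exact mul_le_mul_of_nonneg_left hjen (le_of_lt hWpos)
        _ = Q := by field_simp
    have h2 : W * (W⁻¹ * T) ^ p = T ^ p / W ^ (p - 1) := by
      rw [mul_pow, inv_pow, hWp]
      field_simp
    linarith [h1, h2.symm.le]
  -- FFP expansion
  have hFFP : FFP V ω p = Q + ∑ j, ω j ^ 2 * (Module.finrank ℝ (V j) : ℝ) ^ p := by
    rw [FFP]
    have : ∀ i j, ω i * ω j * trPP (V i) (V j) ^ p = ω i * ω j * x i j ^ p := by
      intro i j; rw [htr]
    simp_rw [this]
    rw [sum_split (fun i j => ω i * ω j * x i j ^ p)]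
    congr 1
    refine Finset.sum_congr rfl fun j _ => ?_
    rw [hxdiag, sq]
  have hple : (m ^ 2 / d - D) ^ p ≤ T ^ p := pow_le_pow_left₀ hpos hTlow p
  have hfinal : (m ^ 2 / d - D) ^ p / W ^ (p - 1) ≤ Q := by
    calc (m ^ 2 / d - D) ^ p / W ^ (p - 1) ≤ T ^ p / W ^ (p - 1) := by gcongr
      _ ≤ Q := hQlow
  rw [ge_iff_le, hFFP]
  linarith [hfinal]
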